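/- arXiv:1208.4676 — 2 statements merged into one kernel-verified Lean document; each statement's English description precedes it below -/
import Mathlib

section
/- In a convex body K ⊆ ℝ^d, the set of exposed points of K is dense in the set of extreme points of K (Straszewicz's theorem). -/
open Set Metric RealInnerProductSpace

/-- In a Euclidean space, the convex hull of a compact set is compact (via Carathéodory). -/
lemma aux_isCompact_convexHull {d : ℕ} {s : Set (EuclideanSpace ℝ (Fin d))}
    (hs : IsCompact s) : IsCompact (convexHull ℝ s) := by
  classical
  rcases s.eq_empty_or_nonempty with rfl | hne
  · simp only [convexHull_empty]; exact isCompact_empty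
  set m := d + 1
  set f : (Fin m → ℝ) × (Fin m → EuclideanSpace ℝ (Fin d)) → EuclideanSpace ℝ (Fin d) :=
    fun p => ∑ i, p.1 i • p.2 i with hf
  have hcont : Continuous f := by
    apply continuous_finset_sum
    intro i _
    exact ((continuous_apply i).comp continuous_fst).smul
      ((continuous_apply i).comp continuous_snd)
  set T : Set ((Fin m → ℝ) × (Fin m → EuclideanSpace ℝ (Fin d))) :=
    (stdSimplex ℝ (Fin m)) ×ˢ (Set.univ.pi fun _ => s) with hT
  have hTc : IsCompact T :=
    IsCompact.prod (isCompact_stdSimplex ..) (isCompact_univ_pi fun _ => hs)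
  have heq : convexHull ℝ s = f '' T := by
    apply Subset.antisymm
    · intro x hx
      obtain ⟨ι, hι, z, w, hzs, hai, hwpos, hwsum, hcomb⟩ :=
        eq_pos_convex_span_of_mem_convexHull hx
      letI : Fintype ι := hι
      haveI hιne : Nonempty ι := by
        rcases isEmpty_or_nonempty ι with h | h
        · exfalso
          rw [Finset.univ_eq_empty, Finset.sum_empty] at hwsum
          norm_num at hwsum
        · exact h
      obtain ⟨i₀⟩ := id hιne
      have hcard : Fintype.card ι ≤ m := by
        have h1 := hai.finrank_vectorSpan_add_one
        have h2 : Module.finrank ℝ (vectorSpan ℝ (Set.range z)) ≤ d := by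
          have := Submodule.finrank_le (vectorSpan ℝ (Set.range z))
          simpa [finrank_euclideanSpace_fin] using this
        omega
      obtain ⟨φ⟩ : Nonempty (ι ↪ Fin m) :=
        Function.Embedding.nonempty_of_card_le (by simpa using hcard)
      set W : Fin m → ℝ := fun j => if h : ∃ i, φ i = j then w h.choose else 0 with hW
      set Z : Fin m → EuclideanSpace ℝ (Fin d) :=
        fun j => if h : ∃ i, φ i = j then z h.choose else z i₀ with hZ
      have hWφ : ∀ i, W (φ i) = w i := by
        intro i
        have h : ∃ i', φ i' = φ i := ⟨i, rfl⟩
        simp only [hW, dif_pos h]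
        exact congrArg w (φ.injective h.choose_spec)
      have hZφ : ∀ i, Z (φ i) = z i := by
        intro i
        have h : ∃ i', φ i' = φ i := ⟨i, rfl⟩
        simp only [hZ, dif_pos h]
        exact congrArg z (φ.injective h.choose_spec)
      have hsumW : ∑ j, W j = 1 := by
        rw [← Finset.sum_subset (Finset.subset_univ (Finset.univ.map φ))
          (fun j _ hj => ?_)]
        · rw [Finset.sum_map]
          simpa [hWφ] using hwsum
        · simp only [Finset.mem_map, Finset.mem_univ, true_and] at hj
          simp only [hW, dif_neg hj]
      have hsumWZ : ∑ j, W j • Z j = x := by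
        rw [← Finset.sum_subset (Finset.subset_univ (Finset.univ.map φ))
          (fun j _ hj => ?_)]
        · rw [Finset.sum_map]
          simp only [hWφ, hZφ]
          exact hcomb
        · simp only [Finset.mem_map, Finset.mem_univ, true_and] at hj
          simp only [hW, dif_neg hj, zero_smul]
      refine ⟨(W, Z), ⟨⟨fun j => ?_, hsumW⟩, fun j _ => ?_⟩, hsumWZ⟩
      · by_cases h : ∃ i, φ i = j
        · simp only [hW, dif_pos h]; exact (hwpos _).le
        · simp only [hW, dif_neg h]; exact le_refl 0
      · by_cases h : ∃ i, φ i = j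
        · simp only [hZ, dif_pos h]; exact hzs ⟨_, rfl⟩
        · simp only [hZ, dif_neg h]; exact hzs ⟨i₀, rfl⟩
    · rintro _ ⟨⟨w, y⟩, ⟨hw, hy⟩, rfl⟩
      exact (convex_convexHull ℝ s).sum_mem (fun i _ => hw.1 i) hw.2
        (fun i _ => subset_convexHull ℝ s (hy i (mem_univ i)))
  rw [heq]
  exact hTc.image hcont

/-- A farthest point of a set from any given point is an exposed point. -/
lemma aux_farthest_exposed {d : ℕ} {K : Set (EuclideanSpace ℝ (Fin d))}
    {z f : EuclideanSpace ℝ (Fin d)} (hf : f ∈ K)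
    (hmax : ∀ y ∈ K, ‖y - z‖ ≤ ‖f - z‖) : f ∈ K.exposedPoints ℝ := by
  rw [exposed_point_def]
  by_cases hfz : f = z
  · refine ⟨hf, 0, fun y hy => ⟨le_refl _, fun _ => ?_⟩⟩
    have h1 := hmax y hy
    rw [hfz, sub_self, norm_zero] at h1
    have h2 : y - z = 0 := by rwa [← norm_le_zero_iff]
    rw [hfz]
    exact sub_eq_zero.mp h2
  · have hfz0 : f - z ≠ 0 := sub_ne_zero.mpr hfz
    have hfzpos : 0 < ‖f - z‖ := norm_pos_iff.mpr hfz0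
    refine ⟨hf, innerSL ℝ (f - z), fun y hy => ?_⟩
    have hyz := hmax y hy
    have hCS : ⟪f - z, y - z⟫ ≤ ‖f - z‖ * ‖y - z‖ := real_inner_le_norm _ _
    have e1 : ⟪f - z, y - z⟫ = ⟪f - z, y⟫ - ⟪f - z, z⟫ := inner_sub_right _ _ _
    have e2 : ⟪f - z, f - z⟫ = ⟪f - z, f⟫ - ⟪f - z, z⟫ := inner_sub_right _ _ _
    have e3 : ⟪f - z, f - z⟫ = ‖f - z‖ ^ 2 := real_inner_self_eq_norm_sq _
    simp only [innerSL_apply_apply]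
    constructor
    · nlinarith [hfzpos.le]
    · intro hle
      have h4 : ‖f - z‖ ^ 2 ≤ ⟪f - z, y - z⟫ := by linarith
      have h5 : ‖f - z‖ ≤ ‖y - z‖ := by nlinarith
      have heqn : ‖y - z‖ = ‖f - z‖ := le_antisymm hyz h5
      have hinner : ⟪f - z, y - z⟫ = ‖f - z‖ * ‖y - z‖ := by
        refine le_antisymm hCS ?_
        rw [heqn]
        nlinarith
      have hsm := inner_eq_norm_mul_iff_real.mp hinner
      rw [heqn] at hsm
      have hsub : f - z = y - z := smul_right_injective _ hfzpos.ne' hsm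
      have := sub_left_inj.mp hsub
      exact this.symm

set_option maxHeartbeats 1000000 in
/-- Straszewicz's theorem: In a convex body K ⊆ ℝ^d, the set of exposed
points of K is dense in the set of extreme points of K. -/
theorem stmt_5 (d : ℕ) (K : Set (EuclideanSpace ℝ (Fin d)))
    (hK : IsCompact K) (hconv : Convex ℝ K) :
    K.extremePoints ℝ ⊆ closure (K.exposedPoints ℝ) := by
  classical
  intro x hx
  have hxK : x ∈ K := hx.1
  rw [Metric.mem_closure_iff]
  intro ε hε
  set S : Set (EuclideanSpace ℝ (Fin d)) := K \ ball x ε with hSdef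
  have hScomp : IsCompact S := by
    rw [hSdef, diff_eq]
    exact hK.inter_right isOpen_ball.isClosed_compl
  have hC : IsCompact (convexHull ℝ S) := aux_isCompact_convexHull hScomp
  have hxC : x ∉ convexHull ℝ S := by
    have h2 := (hconv.mem_extremePoints_iff_mem_diff_convexHull_diff.mp hx).2
    intro h
    exact h2 (convexHull_mono
      (diff_subset_diff_right (singleton_subset_iff.mpr (mem_ball_self hε))) h)
  obtain ⟨l, u, hlu, hul⟩ :=
    geometric_hahn_banach_closed_point (convex_convexHull ℝ S) hC.isClosed hxC
  set w : EuclideanSpace ℝ (Fin d) :=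
    (InnerProductSpace.toDual ℝ (EuclideanSpace ℝ (Fin d))).symm l with hwdef
  have hw : ∀ y : EuclideanSpace ℝ (Fin d), ⟪w, y⟫ = l y :=
    fun y => InnerProductSpace.toDual_symm_apply
  obtain ⟨r, hr⟩ := hK.isBounded.subset_closedBall x
  set D := max r 0 with hDdef
  have hDpos : 0 ≤ D := le_max_right _ _
  have hD : ∀ y ∈ K, ‖y - x‖ ≤ D := by
    intro y hy
    have := hr hy
    rw [mem_closedBall, dist_eq_norm] at this
    exact this.trans (le_max_left _ _)
  set η := l x - u with hηdef
  have hη : 0 < η := sub_pos.mpr hul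
  set t : ℝ := D ^ 2 / (2 * η) + 1 with htdef
  have htpos : 0 < t := by
    rw [htdef]; positivity
  have ht : D ^ 2 - 2 * t * η < 0 := by
    have h1 : D ^ 2 / (2 * η) < t := by rw [htdef]; linarith
    have h2 := (div_lt_iff₀ (by positivity : (0:ℝ) < 2 * η)).mp h1
    nlinarith
  set z : EuclideanSpace ℝ (Fin d) := x - t • w with hzdef
  have hcont : ContinuousOn (fun y : EuclideanSpace ℝ (Fin d) => ‖y - z‖) K :=
    ((continuous_id.sub continuous_const).norm).continuousOn
  obtain ⟨f, hfK, hfmax⟩ := hK.exists_isMaxOn ⟨x, hxK⟩ hcont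
  have hfmax' : ∀ y ∈ K, ‖y - z‖ ≤ ‖f - z‖ := fun y hy => hfmax hy
  refine ⟨f, aux_farthest_exposed hfK hfmax', ?_⟩
  by_contra hdist
  push_neg at hdist
  have hfball : f ∉ ball x ε := by
    rw [mem_ball']
    exact not_lt.mpr hdist
  have hfS : f ∈ S := ⟨hfK, hfball⟩
  have hlf : l f < u := hlu _ (subset_convexHull ℝ S hfS)
  have hfx : f - z = (f - x) + t • w := by rw [hzdef]; abel
  have hxz : x - z = t • w := by rw [hzdef]; abel
  have e1 : ‖f - z‖ ^ 2 = ‖f - x‖ ^ 2 + 2 * (t * ⟪f - x, w⟫) + t ^ 2 * ‖w‖ ^ 2 := by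
    rw [hfx, norm_add_sq_real, real_inner_smul_right, norm_smul, Real.norm_eq_abs,
      mul_pow, sq_abs]
  have e2 : ‖x - z‖ ^ 2 = t ^ 2 * ‖w‖ ^ 2 := by
    rw [hxz, norm_smul, Real.norm_eq_abs, mul_pow, sq_abs]
  have e3 : ⟪f - x, w⟫ = l f - l x := by
    rw [real_inner_comm, hw (f - x), map_sub]
  have h4 : ⟪f - x, w⟫ ≤ -η := by rw [e3, hηdef]; linarith
  have h4' : t * ⟪f - x, w⟫ ≤ t * (-η) := mul_le_mul_of_nonneg_left h4 htpos.le
  have h5 : ‖f - x‖ ^ 2 ≤ D ^ 2 := by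
    have := hD f hfK
    nlinarith [norm_nonneg (f - x)]
  have h6 : ‖x - z‖ ≤ ‖f - z‖ := hfmax' x hxK
  have h7 : ‖x - z‖ ^ 2 ≤ ‖f - z‖ ^ 2 := by
    nlinarith [norm_nonneg (x - z), norm_nonneg (f - z)]
  nlinarith
end

section
/- If through every point q of a C²-smooth convex hypersurface M ⊆ ℝ^{n+1} near p there passes a real (n−k)-dimensional affine plane locally contained in M, then the rank of the second fundamental form of M is at most k at every point near p. -/
open Set

section aux

variable {E : Type*} [NormedAddCommGroup E] [NormedSpace ℝ E]

/-- derivative of a monotone function is nonnegative -/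
lemma monotone_hasDerivAt_nonneg {h : ℝ → ℝ} {c t₀ : ℝ} (hm : Monotone h)
    (hd : HasDerivAt h c t₀) : 0 ≤ c := by
  have := hasDerivAt_iff_tendsto_slope.1 hd
  have h2 : Filter.Tendsto (slope h t₀) (nhdsWithin t₀ (Ioi t₀)) (nhds c) :=
    this.mono_left (nhdsWithin_mono _ (fun y hy => ne_of_gt hy))
  refine ge_of_tendsto h2 ?_
  filter_upwards [self_mem_nhdsWithin] with y hy
  have h1 : (0:ℝ) ≤ h y - h t₀ := sub_nonneg.2 (hm (le_of_lt hy))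
  have hy' : (0:ℝ) < y - t₀ := sub_pos.2 hy
  rw [slope_def_field]
  exact div_nonneg h1 hy'.le

/-- line through x with direction v, first derivative -/
lemma hasDerivAt_line {f : E → ℝ} (hf : Differentiable ℝ f) (x v : E) (t₀ : ℝ) :
    HasDerivAt (fun t : ℝ => f (x + t • v)) (fderiv ℝ f (x + t₀ • v) v) t₀ := by
  have hL : HasDerivAt (fun t : ℝ => x + t • v) v t₀ := by
    simpa using ((hasDerivAt_id t₀).smul_const v).const_add x
  exact ((hf _).hasFDerivAt).comp_hasDerivAt t₀ hL

/-- second derivative along a line -/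
lemma hasDerivAt_line_deriv {f : E → ℝ} (hf : ContDiff ℝ 2 f) (x v : E) :
    HasDerivAt (fun t : ℝ => fderiv ℝ f (x + t • v) v)
      (fderiv ℝ (fderiv ℝ f) x v v) 0 := by
  have hL : HasDerivAt (fun t : ℝ => x + t • v) v 0 := by
    simpa using ((hasDerivAt_id (0:ℝ)).smul_const v).const_add x
  have hf' : ContDiff ℝ 1 (fderiv ℝ f) := hf.fderiv_right (by norm_num)
  have hB : HasFDerivAt (fderiv ℝ f) (fderiv ℝ (fderiv ℝ f) x) (x + (0:ℝ) • v) := by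
    simpa using ((hf'.differentiable one_ne_zero) x).hasFDerivAt
  have h1 : HasDerivAt (fun t : ℝ => fderiv ℝ f (x + t • v))
      (fderiv ℝ (fderiv ℝ f) x v) 0 := hB.comp_hasDerivAt 0 hL
  have := (ContinuousLinearMap.apply ℝ ℝ v).hasFDerivAt.comp_hasDerivAt 0 h1
  exact this

end aux

set_option maxHeartbeats 1000000 in
/-- Let M be the graph of a C² convex function f : ℝⁿ → ℝ (a convex
hypersurface in ℝ^{n+1}). If through every point q = (x, f x) of M with x near x₀
there passes a real (n−k)-dimensional affine plane locally contained in M, then the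
rank of the second fundamental form of M (the Hessian of f) is at most k at every
point near x₀. -/
theorem stmt_19 (n k : ℕ) (hk : k < n)
    (f : EuclideanSpace ℝ (Fin n) → ℝ)
    (hf : ContDiff ℝ 2 f) (hconv : ConvexOn ℝ univ f)
    (x₀ : EuclideanSpace ℝ (Fin n))
    (V : Set (EuclideanSpace ℝ (Fin n))) (hV : V ∈ nhds x₀)
    (hplanes : ∀ x ∈ V, ∃ P : AffineSubspace ℝ (EuclideanSpace ℝ (Fin n) × ℝ),
      Module.finrank ℝ P.direction = n - k ∧ (x, f x) ∈ P ∧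
      ∃ U ∈ nhds (x, f x), (P : Set (EuclideanSpace ℝ (Fin n) × ℝ)) ∩ U ⊆
        {z : EuclideanSpace ℝ (Fin n) × ℝ | z.2 = f z.1}) :
    ∃ V' ∈ nhds x₀, ∀ x ∈ V',
      LinearMap.rank ((fderiv ℝ (fderiv ℝ f) x :
        EuclideanSpace ℝ (Fin n) →ₗ[ℝ] (EuclideanSpace ℝ (Fin n) →L[ℝ] ℝ))) ≤ k := by
  have hfdiff : Differentiable ℝ f := hf.differentiable two_ne_zero
  refine ⟨V, hV, fun x hx => ?_⟩
  obtain ⟨P, hPrank, hPx, U, hU, hgraph⟩ := hplanes x hx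
  set B := fderiv ℝ (fderiv ℝ f) x with hB
  -- symmetry
  have hsymm : ∀ v w : EuclideanSpace ℝ (Fin n), B v w = B w v :=
    fun v w => (hf.contDiffAt.isSymmSndFDerivAt (by simp) : IsSymmSndFDerivAt ℝ f x) v w
  -- positive semidefiniteness
  have hpsd : ∀ w : EuclideanSpace ℝ (Fin n), 0 ≤ B w w := by
    intro w
    have hφconv : ConvexOn ℝ univ (fun t : ℝ => f (x + t • w)) := by
      have := hconv.comp_affineMap (AffineMap.lineMap x (x + w))
      simp only [preimage_univ] at this
      convert this using 2 with t
      any_goals rfl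
      simp only [Function.comp_apply, AffineMap.lineMap_apply, vadd_eq_add, vsub_eq_sub,
        add_sub_cancel_left]
      rw [add_comm]
    have hmono : Monotone (deriv (fun t : ℝ => f (x + t • w))) := by
      have := hφconv.monotoneOn_deriv (fun t _ => (hasDerivAt_line hfdiff x w t).differentiableAt)
      rw [← monotoneOn_univ]
      simpa [interior_univ] using this
    have hderiv : (fun t : ℝ => fderiv ℝ f (x + t • w) w)
        = deriv (fun t : ℝ => f (x + t • w)) := by
      funext t; exact ((hasDerivAt_line hfdiff x w t).deriv).symm
    exact monotone_hasDerivAt_nonneg (hderiv ▸ hmono) (hasDerivAt_line_deriv hf x w)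
  -- points of the direction give affine lines in the graph
  have hline : ∀ v : EuclideanSpace ℝ (Fin n), ∀ c : ℝ, (v, c) ∈ P.direction →
      ∀ᶠ t in nhds (0:ℝ), f (x + t • v) = f x + t * c := by
    intro v c hvc
    have hcont : Continuous (fun t : ℝ => ((x + t • v, f x + t * c) : EuclideanSpace ℝ (Fin n) × ℝ)) := by
      fun_prop
    have h0 : (fun t : ℝ => ((x + t • v, f x + t * c) : EuclideanSpace ℝ (Fin n) × ℝ)) 0 = (x, f x) := by simp
    have hmem : ∀ᶠ t in nhds (0:ℝ), ((x + t • v, f x + t * c) : EuclideanSpace ℝ (Fin n) × ℝ) ∈ U := by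
      have h1 := hcont.continuousAt (x := (0:ℝ))
      simp only [ContinuousAt, zero_smul, add_zero, zero_mul] at h1
      exact h1 hU
    filter_upwards [hmem] with t ht
    have hP : ((x + t • v, f x + t * c) : EuclideanSpace ℝ (Fin n) × ℝ) ∈ P := by
      have : ((t • v, t • c) : EuclideanSpace ℝ (Fin n) × ℝ) ∈ P.direction := P.direction.smul_mem t hvc
      have h2 := AffineSubspace.vadd_mem_of_mem_direction this hPx
      have heq : ((x + t • v, f x + t * c) : EuclideanSpace ℝ (Fin n) × ℝ)
          = (t • ((v, c) : EuclideanSpace ℝ (Fin n) × ℝ)) +ᵥ (x, f x) := by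
        rw [Prod.ext_iff]
        constructor
        · show x + t • v = t • v + x
          abel
        · show f x + t * c = t • c + f x
          simp [smul_eq_mul]; ring
      rw [heq]
      exact h2
    exact (hgraph ⟨hP, ht⟩).symm
  -- vanishing of B on directions
  have hzero : ∀ v : EuclideanSpace ℝ (Fin n), ∀ c : ℝ, (v, c) ∈ P.direction → B v v = 0 := by
    intro v c hvc
    have hev := hline v c hvc
    -- the derivative function is eventually constant equal to c
    have hd : ∀ᶠ t in nhds (0:ℝ), fderiv ℝ f (x + t • v) v = c := by
      obtain ⟨s, hsub, hopen, h0s⟩ := mem_nhds_iff.1 hev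
      filter_upwards [hopen.mem_nhds h0s] with t ht
      have h1 : HasDerivAt (fun t : ℝ => f (x + t • v)) (fderiv ℝ f (x + t • v) v) t :=
        hasDerivAt_line hfdiff x v t
      have h2 : HasDerivAt (fun t : ℝ => f x + t * c) c t := by
        simpa using ((hasDerivAt_id t).mul_const c).const_add (f x)
      have h3 : HasDerivAt (fun t : ℝ => f (x + t • v)) c t := by
        apply h2.congr_of_eventuallyEq
        filter_upwards [hopen.mem_nhds ht] with u hu using hsub hu
      exact h1.unique h3
    have h4 : HasDerivAt (fun t : ℝ => fderiv ℝ f (x + t • v) v) (B v v) 0 :=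
      hasDerivAt_line_deriv hf x v
    have h5 : HasDerivAt (fun _ : ℝ => (c:ℝ)) (B v v) 0 := by
      apply h4.congr_of_eventuallyEq
      filter_upwards [hd] with t ht using ht.symm
    exact ((hasDerivAt_const (0:ℝ) c).unique h5).symm
  -- B v = 0 for v in the projected direction
  have hker : ∀ v : EuclideanSpace ℝ (Fin n), ∀ c : ℝ, (v, c) ∈ P.direction → B v = 0 := by
    intro v c hvc
    ext w
    have hvv : B v v = 0 := hzero v c hvc
    have key : ∀ t : ℝ, 0 ≤ t * (2 * B v w) + t^2 * B w w := by
      intro t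
      have := hpsd (v + t • w)
      have hexp : B (v + t • w) (v + t • w)
          = B v v + t * (B v w + B w v) + t^2 * B w w := by
        simp only [map_add, map_smul, ContinuousLinearMap.add_apply,
          ContinuousLinearMap.smul_apply, smul_eq_mul]
        ring
      rw [hexp, hvv, hsymm w v] at this
      linarith
    set q := B v w with hq
    set r := B w w with hrdef
    have hr : 0 ≤ r := hpsd w
    have hq0 : q = 0 := by
      rcases eq_or_lt_of_le hr with hr0 | hr0
      · have h1 := key (-q)
        rw [← hr0] at h1
        nlinarith [sq_nonneg q]
      · have h1 := key (-q / r)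
        have hrne : r ≠ 0 := ne_of_gt hr0
        have h2 : -q / r * (2 * q) + (-q / r) ^ 2 * r = -q ^ 2 / r := by
          field_simp
          ring
        rw [h2] at h1
        have h3 : (0:ℝ) * r ≤ -q ^ 2 := (le_div_iff₀ hr0).1 h1
        nlinarith [sq_nonneg q]
    simpa using hq0
  -- rank bound
  set Blin := (B : EuclideanSpace ℝ (Fin n) →ₗ[ℝ] (EuclideanSpace ℝ (Fin n) →L[ℝ] ℝ)) with hBlin
  -- projection of the direction
  set φ := (LinearMap.fst ℝ (EuclideanSpace ℝ (Fin n)) ℝ).domRestrict P.direction with hφ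
  have hφinj : Function.Injective φ := by
    rw [← LinearMap.ker_eq_bot]
    rw [Submodule.eq_bot_iff]
    rintro ⟨⟨v, c⟩, hvc⟩ hv
    rw [LinearMap.mem_ker, hφ, LinearMap.domRestrict_apply] at hv
    have hv0 : v = 0 := hv
    subst hv0
    -- show c = 0 using the graph condition
    have hev := hline 0 c hvc
    have hc : c = 0 := by
      by_contra hc
      have : ∀ᶠ t in nhds (0:ℝ), t * c = 0 := by
        filter_upwards [hev] with t ht
        simpa using ht.symm
      obtain ⟨s, hsub, hopen, h0s⟩ := mem_nhds_iff.1 this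
      obtain ⟨ε, hε, hball⟩ := Metric.isOpen_iff.1 hopen 0 h0s
      have hmem : (ε/2) ∈ s := hball (by simp [abs_of_pos hε, Real.dist_eq]; linarith)
      have := hsub hmem
      simp only [mem_setOf_eq] at this
      have : ε / 2 * c = 0 := this
      rcases mul_eq_zero.1 this with h | h
      · linarith
      · exact hc h
    simp [Subtype.ext_iff, Prod.ext_iff, hc]
  have hrange_le : LinearMap.range φ ≤ LinearMap.ker Blin := by
    rintro v ⟨⟨⟨v', c⟩, hvc⟩, rfl⟩
    simp only [LinearMap.mem_ker]
    have := hker v' c hvc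
    simpa [hφ, hBlin, LinearMap.domRestrict_apply] using this
  have hrankφ : Module.finrank ℝ (LinearMap.range φ) = n - k := by
    rw [LinearMap.finrank_range_of_inj hφinj, hPrank]
  have hkerB : n - k ≤ Module.finrank ℝ (LinearMap.ker Blin) := by
    rw [← hrankφ]
    exact Submodule.finrank_mono hrange_le
  have hsum := LinearMap.finrank_range_add_finrank_ker Blin
  have hdim : Module.finrank ℝ (EuclideanSpace ℝ (Fin n)) = n := finrank_euclideanSpace_fin
  rw [hdim] at hsum
  have hfr : Module.finrank ℝ (LinearMap.range Blin) ≤ k := by omega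
  have : LinearMap.rank Blin = (Module.finrank ℝ (LinearMap.range Blin) : Cardinal) := by
    rw [LinearMap.rank, Module.finrank_eq_rank]
  rw [this]
  exact_mod_cast hfr
end
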